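/- Let μ be a monotone measure on a finite set 𝒜 with at least two elements, let a, b ∈ 𝒜 be distinct duplicates with respect to μ, and let f : 𝒜 → ℝ satisfy f(a) ≤ f(b). Then ∫ f dμ = ∫ f|_{𝒜∖{a}} dμ|_{𝒫(𝒜∖{a})}, i.e., the Choquet integral of f over 𝒜 with respect to μ equals the Choquet integral of the restriction of f to 𝒜 ∖ {a} with respect to the restriction of μ to subsets of 𝒜 ∖ {a}. -/

import Mathlib

open Finset

/-- The set `{x*_k, …, x*_{n-1}}` (0-indexed): the image under the enumeration `e`
of the indices `≥ k`. -/
def upSet {X : Type*} [DecidableEq X] {n : ℕ} (e : Fin n ≃ X) (k : ℕ) : Finset X :=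
  (Finset.univ.filter fun j : Fin n => k ≤ (j : ℕ)).image e

/-- The Choquet integral of `f` with respect to the set function `μ`, computed via an
enumeration `e : Fin n ≃ X` (assumed to sort `f` nondecreasingly):
`∑ i, f(x*_i) · [μ(A*_i) − μ(A*_{i+1})]` where `A*_i = {x*_i, …, x*_{n-1}}`
(note `A*_n = ∅`, and `μ ∅ = 0` for a monotone measure). -/
def choquetSum {X : Type*} [DecidableEq X] {n : ℕ} (μ : Finset X → ℝ) (f : X → ℝ)
    (e : Fin n ≃ X) : ℝ :=
  ∑ i : Fin n, f (e i) * (μ (upSet e i) - μ (upSet e ((i : ℕ) + 1)))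

lemma mem_upSet {X : Type*} [DecidableEq X] {n : ℕ} (e : Fin n ≃ X) (k : ℕ) (x : X) :
    x ∈ upSet e k ↔ k ≤ ((e.symm x : Fin n) : ℕ) := by
  simp only [upSet, Finset.mem_image, Finset.mem_filter, Finset.mem_univ, true_and]
  constructor
  · rintro ⟨j, hj, rfl⟩; simpa using hj
  · intro h; exact ⟨e.symm x, h, e.apply_symm_apply x⟩

/-- `f`-values along the enumeration, as a function on `ℕ` (junk value `0` out of range). -/
noncomputable def fval {X : Type*} {n : ℕ} (f : X → ℝ) (e : Fin n ≃ X) (i : ℕ) : ℝ :=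
  if h : i < n then f (e ⟨i, h⟩) else 0

lemma choquetSum_eq_range {X : Type*} [DecidableEq X] {n : ℕ} (μ : Finset X → ℝ) (f : X → ℝ)
    (e : Fin n ≃ X) :
    choquetSum μ f e
      = ∑ i ∈ Finset.range n, fval f e i * (μ (upSet e i) - μ (upSet e (i + 1))) := by
  rw [choquetSum, ← Fin.sum_univ_eq_sum_range
      (fun i => fval f e i * (μ (upSet e i) - μ (upSet e (i + 1)))) n]
  refine Finset.sum_congr rfl fun i _ => ?_
  simp [fval]

/-- Abel summation for the Choquet sums. -/
lemma abel_sum (a M : ℕ → ℝ) (n : ℕ) :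
    ∑ i ∈ Finset.range n, a i * (M i - M (i + 1))
      = (∑ i ∈ Finset.range n, (a i - if i = 0 then 0 else a (i - 1)) * M i)
        - (if n = 0 then 0 else a (n - 1)) * M n := by
  induction n with
  | zero => simp
  | succ n ih =>
    rw [Finset.sum_range_succ, Finset.sum_range_succ, ih]
    by_cases hn : n = 0
    · subst hn; simp; ring
    · simp only [hn, if_false, Nat.succ_ne_zero, Nat.add_sub_cancel]
      ring

lemma upSet_of_ge {X : Type*} [DecidableEq X] {n : ℕ} (e : Fin n ≃ X) {k : ℕ} (h : n ≤ k) :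
    upSet e k = ∅ := by
  ext x
  simp only [mem_upSet, Finset.notMem_empty, iff_false, not_le]
  exact lt_of_lt_of_le (e.symm x).isLt h

lemma sorted_comp_eq {n : ℕ} (g : Fin n → ℝ) (σ : Equiv.Perm (Fin n))
    (hg : Monotone g) (hgσ : Monotone (g ∘ σ)) : g ∘ σ = g := by
  have h1 : g ∘ σ = g ∘ Tuple.sort g := Tuple.comp_sort_eq_comp_iff_monotone.mpr hgσ
  have h2 : g ∘ (Equiv.refl (Fin n)) = g ∘ Tuple.sort g :=
    Tuple.comp_sort_eq_comp_iff_monotone.mpr (by simpa using hg)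
  simp only [Equiv.coe_refl, Function.comp_id] at h2
  rw [h1, ← h2]

lemma mem_upSet_iff_le {X : Type*} [DecidableEq X] {n : ℕ} (e : Fin n ≃ X) (f : X → ℝ)
    (hm : Monotone (f ∘ e)) {i : ℕ} (hi : i < n) (h0 : 0 < i)
    (hlt : f (e ⟨i - 1, by omega⟩) < f (e ⟨i, hi⟩)) (x : X) :
    x ∈ upSet e i ↔ f (e ⟨i, hi⟩) ≤ f x := by
  rw [mem_upSet]
  constructor
  · intro h
    have := hm (a := ⟨i, hi⟩) (b := e.symm x) (by rw [Fin.le_def]; exact h)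
    simpa using this
  · intro h
    by_contra hc
    push_neg at hc
    have h2 : f (e (e.symm x)) ≤ f (e ⟨i - 1, by omega⟩) :=
      hm (a := e.symm x) (b := ⟨i - 1, by omega⟩)
        (by rw [Fin.le_def]; show ((e.symm x : Fin n) : ℕ) ≤ i - 1; omega)
    rw [e.apply_symm_apply] at h2
    linarith

/-- The Choquet sum does not depend on the choice of sorting enumeration. -/
lemma choquetSum_indep {X : Type*} [DecidableEq X] {n : ℕ} (μ : Finset X → ℝ) (f : X → ℝ)
    (e₁ e₂ : Fin n ≃ X) (h₁ : Monotone (f ∘ e₁)) (h₂ : Monotone (f ∘ e₂)) :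
    choquetSum μ f e₁ = choquetSum μ f e₂ := by
  have feq : f ∘ e₁ = f ∘ e₂ := by
    have hcomp : (f ∘ e₂) ∘ (e₁.trans e₂.symm) = f ∘ e₁ := by
      funext i; simp [Function.comp]
    have := sorted_comp_eq (f ∘ e₂) (e₁.trans e₂.symm) h₂ (by rw [hcomp]; exact h₁)
    rw [hcomp] at this
    exact this
  have feq' : ∀ x : Fin n, f (e₁ x) = f (e₂ x) := fun x => congrFun feq x
  have fveq : fval f e₁ = fval f e₂ := by
    funext i
    unfold fval
    by_cases h : i < n
    · simp only [dif_pos h]; exact congrFun feq ⟨i, h⟩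
    · simp [h]
  rw [choquetSum_eq_range, choquetSum_eq_range,
    abel_sum (fval f e₁) (fun j => μ (upSet e₁ j)) n,
    abel_sum (fval f e₂) (fun j => μ (upSet e₂ j)) n]
  rw [fveq, upSet_of_ge e₁ le_rfl, upSet_of_ge e₂ le_rfl]
  congr 1
  refine Finset.sum_congr rfl fun i hi => ?_
  have hi' : i < n := Finset.mem_range.mp hi
  by_cases hc : fval f e₂ i - (if i = 0 then 0 else fval f e₂ (i - 1)) = 0
  · rw [hc, zero_mul, zero_mul]
  · suffices h : upSet e₁ i = upSet e₂ i by rw [h]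
    by_cases h0 : i = 0
    · subst h0; ext x; simp [mem_upSet]
    · have h0' : 0 < i := Nat.pos_of_ne_zero h0
      rw [if_neg h0] at hc
      have h1m : i - 1 < n := by omega
      have hlt2 : f (e₂ ⟨i - 1, h1m⟩) < f (e₂ ⟨i, hi'⟩) := by
        have hle : f (e₂ ⟨i - 1, h1m⟩) ≤ f (e₂ ⟨i, hi'⟩) :=
          h₂ (a := ⟨i - 1, h1m⟩) (b := ⟨i, hi'⟩)
            (by rw [Fin.le_def]; show i - 1 ≤ i; omega)
        have hne : f (e₂ ⟨i - 1, h1m⟩) ≠ f (e₂ ⟨i, hi'⟩) := by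
          intro h
          apply hc
          unfold fval
          rw [dif_pos hi', dif_pos h1m, h, sub_self]
        exact lt_of_le_of_ne hle hne
      have hlt1 : f (e₁ ⟨i - 1, h1m⟩) < f (e₁ ⟨i, hi'⟩) := by
        rw [feq' ⟨i - 1, h1m⟩, feq' ⟨i, hi'⟩]
        exact hlt2
      ext x
      rw [mem_upSet_iff_le e₁ f h₁ hi' h0' hlt1, mem_upSet_iff_le e₂ f h₂ hi' h0' hlt2,
        feq' ⟨i, hi'⟩]

section Insert

variable {A : Type*} [DecidableEq A] {m : ℕ} (a : A) (e' : Fin m ≃ {x : A // x ≠ a}) (k : Fin m)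

/-- The enumeration of `A` obtained from an enumeration of `A \ {a}` by inserting `a`
at position `k`. -/
def insEnum : Fin (m + 1) ≃ A :=
  (finSuccEquiv' k.castSucc).trans (e'.optionCongr.trans (Equiv.optionSubtypeNe a))

lemma insEnum_symm_a : (insEnum a e' k).symm a = k.castSucc := by
  simp [insEnum, Equiv.symm_trans_apply, Equiv.optionSubtypeNe_symm_self, ← Equiv.optionCongr_symm]

lemma insEnum_symm_ne (x : A) (hx : x ≠ a) :
    ((insEnum a e' k).symm x : ℕ) =
      if ((e'.symm ⟨x, hx⟩ : Fin m) : ℕ) < (k : ℕ) then ((e'.symm ⟨x, hx⟩ : Fin m) : ℕ)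
      else ((e'.symm ⟨x, hx⟩ : Fin m) : ℕ) + 1 := by
  have h1 : (Equiv.optionSubtypeNe a).symm x = some ⟨x, hx⟩ :=
    Equiv.optionSubtypeNe_symm_of_ne hx
  have h2 : (insEnum a e' k).symm x = (finSuccEquiv' k.castSucc).symm (some (e'.symm ⟨x, hx⟩)) := by
    simp [insEnum, Equiv.symm_trans_apply, h1, ← Equiv.optionCongr_symm]
  rw [h2]
  by_cases h : ((e'.symm ⟨x, hx⟩ : Fin m) : ℕ) < (k : ℕ)
  · rw [finSuccEquiv'_symm_some_below (by rw [Fin.lt_def]; simpa using h)]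
    simp [h]
  · rw [finSuccEquiv'_symm_some_above (by rw [Fin.le_def]; simp; omega)]
    simp [h]

lemma insEnum_apply_lt (i : Fin (m + 1)) (h : (i : ℕ) < (k : ℕ)) :
    insEnum a e' k i = (e' ⟨(i : ℕ), h.trans k.isLt⟩ : {x : A // x ≠ a}).val := by
  have hi : i = Fin.castSucc ⟨(i : ℕ), h.trans k.isLt⟩ := by ext; simp
  conv_lhs => rw [hi]
  simp only [insEnum, Equiv.trans_apply]
  rw [finSuccEquiv'_below (by rw [Fin.lt_def]; simpa using h)]
  simp

lemma insEnum_apply_eq (i : Fin (m + 1)) (h : (i : ℕ) = (k : ℕ)) : insEnum a e' k i = a := by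
  have hi : i = k.castSucc := by ext; simpa using h
  rw [hi]
  simp [insEnum, Equiv.trans_apply]

lemma insEnum_apply_gt (i : Fin (m + 1)) (h : (k : ℕ) < (i : ℕ)) :
    insEnum a e' k i
      = (e' ⟨(i : ℕ) - 1, by have := i.isLt; omega⟩ : {x : A // x ≠ a}).val := by
  have hi1 : (i : ℕ) - 1 < m := by have := i.isLt; omega
  have hi : i = Fin.succ ⟨(i : ℕ) - 1, hi1⟩ := by ext; simp; omega
  conv_lhs => rw [hi]
  simp only [insEnum, Equiv.trans_apply]
  rw [finSuccEquiv'_above (by rw [Fin.le_def]; simp; omega)]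
  simp

lemma insEnum_upSet_le {i : ℕ} (hik : i ≤ (k : ℕ)) :
    upSet (insEnum a e' k) i = insert a ((upSet e' i).image Subtype.val) := by
  ext x
  by_cases hx : x = a
  · subst hx
    simp only [mem_upSet, insEnum_symm_a, Fin.coe_castSucc, Finset.mem_insert, true_or, iff_true]
    exact hik
  · rw [mem_upSet, insEnum_symm_ne a e' k x hx]
    simp only [Finset.mem_insert, Finset.mem_image]
    have hmem : ∀ y : {z : A // z ≠ a}, y ∈ upSet e' i ↔ i ≤ ((e'.symm y : Fin m) : ℕ) :=
      fun y => mem_upSet e' i y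
    constructor
    · intro hle
      right
      refine ⟨⟨x, hx⟩, (hmem _).mpr ?_, rfl⟩
      split_ifs at hle with h
      · exact hle
      · omega
    · rintro (rfl | ⟨y, hy, hyx⟩)
      · exact absurd rfl hx
      · have hy' : y = ⟨x, hx⟩ := Subtype.ext hyx
        subst hy'
        have := (hmem _).mp hy
        split_ifs <;> omega

lemma insEnum_upSet_gt {i : ℕ} (hik : (k : ℕ) < i) :
    upSet (insEnum a e' k) i = (upSet e' (i - 1)).image Subtype.val := by
  ext x
  by_cases hx : x = a
  · subst hx
    simp only [mem_upSet, insEnum_symm_a, Fin.coe_castSucc, Finset.mem_image]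
    constructor
    · intro h; omega
    · rintro ⟨y, _, hyx⟩; exact absurd hyx y.2
  · rw [mem_upSet, insEnum_symm_ne a e' k x hx]
    simp only [Finset.mem_image]
    have hmem : ∀ y : {z : A // z ≠ a}, y ∈ upSet e' (i - 1) ↔ (i - 1) ≤ ((e'.symm y : Fin m) : ℕ) :=
      fun y => mem_upSet e' (i - 1) y
    constructor
    · intro hle
      refine ⟨⟨x, hx⟩, (hmem _).mpr ?_, rfl⟩
      split_ifs at hle <;> omega
    · rintro ⟨y, hy, hyx⟩
      have hy' : y = ⟨x, hx⟩ := Subtype.ext hyx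
      subst hy'
      have := (hmem _).mp hy
      split_ifs <;> omega

lemma insEnum_monotone (f : A → ℝ) (hs : Monotone fun i => f (e' i).val)
    (hk_mem : f a ≤ f (e' k).val) (hk_min : ∀ j : Fin m, (j : ℕ) < (k : ℕ) → f (e' j).val < f a) :
    Monotone (f ∘ insEnum a e' k) := by
  have sa : ((insEnum a e' k).symm a : ℕ) = (k : ℕ) := by rw [insEnum_symm_a]; simp
  have hval : ∀ (y : A) (hy : y ≠ a), f (e' (e'.symm ⟨y, hy⟩)).val = f y := by
    intro y hy
    rw [e'.apply_symm_apply]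
  have key : ∀ x y : A,
      ((insEnum a e' k).symm x : ℕ) ≤ ((insEnum a e' k).symm y : ℕ) → f x ≤ f y := by
    intro x y h
    by_cases hx : x = a <;> by_cases hy : y = a
    · rw [hx, hy]
    · rw [hx] at h ⊢
      rw [sa, insEnum_symm_ne a e' k y hy] at h
      have hky : (k : ℕ) ≤ ((e'.symm ⟨y, hy⟩ : Fin m) : ℕ) := by split_ifs at h <;> omega
      calc f a ≤ f (e' k).val := hk_mem
        _ ≤ f (e' (e'.symm ⟨y, hy⟩)).val := hs (by rw [Fin.le_def]; exact hky)
        _ = f y := hval y hy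
    · rw [hy] at h ⊢
      rw [sa, insEnum_symm_ne a e' k x hx] at h
      have hkx : ((e'.symm ⟨x, hx⟩ : Fin m) : ℕ) < (k : ℕ) := by split_ifs at h <;> omega
      calc f x = f (e' (e'.symm ⟨x, hx⟩)).val := (hval x hx).symm
        _ ≤ f a := le_of_lt (hk_min _ hkx)
    · rw [insEnum_symm_ne a e' k x hx, insEnum_symm_ne a e' k y hy] at h
      rw [← hval x hx, ← hval y hy]
      split_ifs at h with h1 h2 h2
      · exact hs (by rw [Fin.le_def]; exact h)
      · calc f (e' (e'.symm ⟨x, hx⟩)).val ≤ f a := le_of_lt (hk_min _ h1)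
          _ ≤ f (e' k).val := hk_mem
          _ ≤ f (e' (e'.symm ⟨y, hy⟩)).val := hs (by rw [Fin.le_def]; omega)
      · exact absurd h (by omega)
      · exact hs (by rw [Fin.le_def]; omega)
  intro i j hij
  refine key _ _ ?_
  simp only [Equiv.symm_apply_apply]
  exact hij

lemma insEnum_choquet {μ : Finset A → ℝ} {b : A} (hb : b ≠ a) (f : A → ℝ)
    (hdup : ∀ S : Finset A, μ (insert a S) = μ (insert b S))
    (hbk : (k : ℕ) ≤ ((e'.symm ⟨b, hb⟩ : Fin m) : ℕ)) :
    choquetSum μ f (insEnum a e' k) =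
      choquetSum (fun S : Finset {x : A // x ≠ a} => μ (S.image Subtype.val))
        (fun x => f x.val) e' := by
  set e₀ := insEnum a e' k with he₀
  have hkm := k.isLt
  set U' : ℕ → Finset A := fun j => (upSet e' j).image Subtype.val with hU'
  have hins : ∀ i : ℕ, i ≤ (k : ℕ) → μ (insert a (U' i)) = μ (U' i) := by
    intro i hi
    rw [hdup]
    have hbmem : b ∈ U' i :=
      Finset.mem_image.mpr ⟨⟨b, hb⟩, (mem_upSet e' i ⟨b, hb⟩).mpr (le_trans hi hbk), rfl⟩
    rw [Finset.insert_eq_self.mpr hbmem]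
  have Mle : ∀ i : ℕ, i ≤ (k : ℕ) → μ (upSet e₀ i) = μ (U' i) := by
    intro i hi
    rw [he₀, insEnum_upSet_le a e' k hi]
    exact hins i hi
  have Mgt : ∀ i : ℕ, (k : ℕ) < i → μ (upSet e₀ i) = μ (U' (i - 1)) := by
    intro i hi
    rw [he₀, insEnum_upSet_gt a e' k hi]
  rw [choquetSum_eq_range, choquetSum_eq_range]
  set T : ℕ → ℝ := fun j =>
    fval (fun x : {x : A // x ≠ a} => f x.val) e' j * (μ (U' j) - μ (U' (j + 1))) with hT
  set G : ℕ → ℝ := fun i => fval f e₀ i * (μ (upSet e₀ i) - μ (upSet e₀ (i + 1))) with hG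
  have hRHS : (∑ j ∈ Finset.range m,
      fval (fun x : {x : A // x ≠ a} => f x.val) e' j *
        ((fun S : Finset {x : A // x ≠ a} => μ (S.image Subtype.val)) (upSet e' j) -
          (fun S : Finset {x : A // x ≠ a} => μ (S.image Subtype.val)) (upSet e' (j + 1))))
      = ∑ j ∈ Finset.range m, T j := rfl
  rw [hRHS]
  -- the `i < k` terms
  have hlt : ∀ i : ℕ, i < (k : ℕ) → G i = T i := by
    intro i hi
    have him : i < m := by omega
    have him1 : i < m + 1 := by omega
    rw [hG, hT]
    simp only
    rw [Mle i (le_of_lt hi), Mle (i + 1) (by omega)]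
    congr 1
    unfold fval
    rw [dif_pos him1, dif_pos him]
    rw [he₀, insEnum_apply_lt a e' k ⟨i, him1⟩ (by simpa using hi)]
  have hGk : G (k : ℕ) = 0 := by
    rw [hG]
    simp only
    rw [Mle (k : ℕ) le_rfl, Mgt ((k : ℕ) + 1) (by omega), Nat.add_sub_cancel, sub_self, mul_zero]
  have hgt : ∀ l : ℕ, l < m - (k : ℕ) → G ((k : ℕ) + 1 + l) = T ((k : ℕ) + l) := by
    intro l hl
    have h1 : (k : ℕ) + l < m := by omega
    have h2 : (k : ℕ) + 1 + l < m + 1 := by omega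
    rw [hG, hT]
    simp only
    rw [Mgt ((k : ℕ) + 1 + l) (by omega), Mgt ((k : ℕ) + 1 + l + 1) (by omega)]
    have e1 : (k : ℕ) + 1 + l - 1 = (k : ℕ) + l := by omega
    have e2 : (k : ℕ) + 1 + l + 1 - 1 = (k : ℕ) + l + 1 := by omega
    rw [e1, e2]
    congr 1
    unfold fval
    rw [dif_pos h2, dif_pos h1]
    rw [he₀, insEnum_apply_gt a e' k ⟨(k : ℕ) + 1 + l, h2⟩
      (by show (k : ℕ) < (k : ℕ) + 1 + l; omega)]
    have hfin : (⟨((⟨(k : ℕ) + 1 + l, h2⟩ : Fin (m + 1)) : ℕ) - 1, by omega⟩ : Fin m)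
        = (⟨(k : ℕ) + l, h1⟩ : Fin m) := by
      apply Fin.eq_of_val_eq
      show (k : ℕ) + 1 + l - 1 = (k : ℕ) + l
      omega
    rw [hfin]
  -- split the left sum
  have hsplitL : ∑ i ∈ Finset.range (m + 1), G i
      = (∑ i ∈ Finset.range ((k : ℕ) + 1), G i) + ∑ i ∈ Finset.Ico ((k : ℕ) + 1) (m + 1), G i :=
    (Finset.sum_range_add_sum_Ico G (by omega)).symm
  have hsplitR : ∑ j ∈ Finset.range m, T j
      = (∑ j ∈ Finset.range (k : ℕ), T j) + ∑ j ∈ Finset.Ico (k : ℕ) m, T j :=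
    (Finset.sum_range_add_sum_Ico T (by omega)).symm
  rw [hsplitL, hsplitR, Finset.sum_range_succ, hGk, add_zero]
  congr 1
  · exact Finset.sum_congr rfl fun i hi => hlt i (Finset.mem_range.mp hi)
  · rw [Finset.sum_Ico_eq_sum_range, Finset.sum_Ico_eq_sum_range]
    have hm1 : m + 1 - ((k : ℕ) + 1) = m - (k : ℕ) := by omega
    rw [hm1]
    refine Finset.sum_congr rfl fun l hl => ?_
    have hl' : l < m - (k : ℕ) := Finset.mem_range.mp hl
    exact hgt l hl'

end Insert

/-- If `a, b` are distinct duplicates with respect to a monotone measure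
`μ` on a finite set `𝒜` (with at least two elements) and `f(a) ≤ f(b)`, then the Choquet
integral of `f` over `𝒜` equals the Choquet integral of the restriction of `f` to
`𝒜 \ {a}` with respect to the restriction of `μ` to subsets of `𝒜 \ {a}`. -/
theorem choquet_integral_remove_duplicate
    {A : Type*} [Fintype A] [DecidableEq A] {n m : ℕ}
    (μ : Finset A → ℝ) (hμ_empty : μ ∅ = 0)
    (hμ_mono : ∀ S T : Finset A, S ⊆ T → μ S ≤ μ T)
    (a b : A) (hab : a ≠ b)
    (hdup : ∀ S : Finset A, μ (insert a S) = μ (insert b S))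
    (f : A → ℝ) (hf : f a ≤ f b)
    (e : Fin n ≃ A) (hsort : Monotone (f ∘ e))
    (e' : Fin m ≃ {x : A // x ≠ a}) (hsort' : Monotone (fun i => f (e' i).val)) :
    choquetSum μ f e =
      choquetSum (fun S : Finset {x : A // x ≠ a} => μ (S.image Subtype.val))
        (fun x => f x.val) e' := by
  have hb : b ≠ a := hab.symm
  -- cardinality: n = m + 1
  have hn : n = Fintype.card A := by
    rw [← Fintype.card_fin n]
    exact Fintype.card_congr e
  have hm : m = Fintype.card {x : A // x ≠ a} := by
    rw [← Fintype.card_fin m]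
    exact Fintype.card_congr e'
  have hcompl : Fintype.card {x : A // x ≠ a} = Fintype.card A - 1 := by
    have h1 := Fintype.card_subtype_compl (fun x : A => x = a)
    have h2 : Fintype.card {x : A // x = a} = 1 := Fintype.card_subtype_eq a
    rw [h2] at h1
    exact h1
  have hpos : 0 < Fintype.card A := Fintype.card_pos_iff.mpr ⟨a⟩
  have hnm : n = m + 1 := by omega
  subst hnm
  -- find the insertion position k
  have hKne : (Finset.univ.filter fun j : Fin m => f a ≤ f (e' j).val).Nonempty := by
    refine ⟨e'.symm ⟨b, hb⟩, ?_⟩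
    simp only [Finset.mem_filter, Finset.mem_univ, true_and]
    rw [e'.apply_symm_apply]
    exact hf
  set k : Fin m := (Finset.univ.filter fun j : Fin m => f a ≤ f (e' j).val).min' hKne with hk
  have hk_mem : f a ≤ f (e' k).val := by
    have := Finset.min'_mem _ hKne
    rw [← hk] at this
    exact (Finset.mem_filter.mp this).2
  have hk_min : ∀ j : Fin m, (j : ℕ) < (k : ℕ) → f (e' j).val < f a := by
    intro j hj
    by_contra hc
    push_neg at hc
    have hjmem : j ∈ Finset.univ.filter fun j : Fin m => f a ≤ f (e' j).val := by
      simp only [Finset.mem_filter, Finset.mem_univ, true_and]; exact hc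
    have := Finset.min'_le _ j hjmem
    rw [← hk] at this
    rw [Fin.le_def] at this
    omega
  have hbk : (k : ℕ) ≤ ((e'.symm ⟨b, hb⟩ : Fin m) : ℕ) := by
    have hjmem : e'.symm ⟨b, hb⟩ ∈ Finset.univ.filter fun j : Fin m => f a ≤ f (e' j).val := by
      simp only [Finset.mem_filter, Finset.mem_univ, true_and]
      rw [e'.apply_symm_apply]
      exact hf
    have := Finset.min'_le _ _ hjmem
    rw [← hk] at this
    exact Fin.le_def.mp this
  have hmono0 : Monotone (f ∘ insEnum a e' k) := insEnum_monotone a e' k f hsort' hk_mem hk_min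
  rw [choquetSum_indep μ f e (insEnum a e' k) hsort hmono0]
  exact insEnum_choquet a e' k hb f hdup hbk
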